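/- Let f : ℕ → ℂ be multiplicative with f(p^a) = 0 for all primes p and all integers a ≥ 2. Then the function g(n) = (-1)^{Ω(n)} · ξ(n) · ∏_p f(p)^{ν_p(n)} is the binomial inverse of f, i.e., (f ∘ g)(n) = δ(n) for all positive integers n. -/

import Mathlib

/-- `ξ(n) = ∏_p ν_p(n)!`. -/
def xi (n : ℕ) : ℕ := ∏ p ∈ n.primeFactors, Nat.factorial (n.factorization p)

/-- `Ω(n) = ∑_p ν_p(n)`. -/
def bigOmega (n : ℕ) : ℕ := ∑ p ∈ n.primeFactors, n.factorization p

/-- `∏_p C(ν_p(n), ν_p(d))`. -/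
def binomCoeff (n d : ℕ) : ℕ :=
  ∏ p ∈ n.primeFactors, Nat.choose (n.factorization p) (d.factorization p)

/-- The binomial convolution. -/
noncomputable def bconv (f g : ℕ → ℂ) (n : ℕ) : ℂ :=
  ∑ d ∈ n.divisors, (binomCoeff n d : ℂ) * f d * g (n / d)

/-- `δ(1) = 1`, `δ(n) = 0` for `n > 1`. -/
def delta (n : ℕ) : ℂ := if n = 1 then 1 else 0

/-- Multiplicative arithmetical function. -/
def IsMult (f : ℕ → ℂ) : Prop :=
  f 1 = 1 ∧ ∀ m n : ℕ, 0 < m → 0 < n → Nat.Coprime m n → f (m * n) = f m * f n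

-- auxiliary lemmas


lemma prod_fact_mul_coprime {M : Type*} [CommMonoid M] (h : ℕ → ℕ → M) {m n : ℕ}
    (hco : Nat.Coprime m n) :
    (m * n).factorization.prod h = m.factorization.prod h * n.factorization.prod h := by
  rw [Nat.factorization_mul_of_coprime hco, Finsupp.prod_add_index_of_disjoint]
  simpa using hco.disjoint_primeFactors

lemma xi_eq (n : ℕ) : xi n = n.factorization.prod fun _ k => Nat.factorial k := rfl

lemma bigOmega_eq (n : ℕ) : bigOmega n = n.factorization.sum fun _ k => k := rfl

lemma xi_mul {m n : ℕ} (hco : Nat.Coprime m n) : xi (m * n) = xi m * xi n := by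
  rw [xi_eq, xi_eq, xi_eq, prod_fact_mul_coprime _ hco]

lemma xi_one : xi 1 = 1 := by simp [xi]

lemma xi_ne_zero (n : ℕ) : (xi n : ℂ) ≠ 0 := by
  have : xi n ≠ 0 := by
    rw [xi_eq]; exact Finset.prod_ne_zero_iff.2 fun p _ => Nat.factorial_ne_zero _
  exact_mod_cast this

lemma xi_prime_pow {p : ℕ} (hp : p.Prime) (k : ℕ) : xi (p ^ k) = Nat.factorial k := by
  rw [xi_eq, hp.factorization_pow, Finsupp.prod_single_index (by simp)]

lemma bigOmega_prime_pow {p : ℕ} (hp : p.Prime) (k : ℕ) : bigOmega (p ^ k) = k := by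
  rw [bigOmega_eq, hp.factorization_pow, Finsupp.sum_single_index rfl]

section

variable (f : ℕ → ℂ)

/-- `F n = f n / ξ n`. -/
noncomputable def Faux : ArithmeticFunction ℂ :=
  ⟨fun n => if n = 0 then 0 else f n / xi n, by simp⟩

/-- `G n = (-1)^{Ω n} ∏ f p ^ ν_p(n)`. -/
noncomputable def Gaux : ArithmeticFunction ℂ :=
  ⟨fun n => if n = 0 then 0 else
    (-1 : ℂ) ^ bigOmega n * n.factorization.prod fun p k => f p ^ k, by simp⟩

lemma Faux_apply {n : ℕ} (hn : n ≠ 0) : Faux f n = f n / xi n := if_neg hn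

lemma Gaux_apply {n : ℕ} (hn : n ≠ 0) :
    Gaux f n = (-1 : ℂ) ^ bigOmega n * n.factorization.prod fun p k => f p ^ k := if_neg hn

lemma Faux_one (hf : IsMult f) : Faux f 1 = 1 := by
  rw [Faux_apply f one_ne_zero, hf.1, xi_one]; norm_num

lemma Gaux_one : Gaux f 1 = 1 := by
  rw [Gaux_apply f one_ne_zero]
  simp [bigOmega_eq, Nat.factorization_one]

lemma Faux_mult (hf : IsMult f) : (Faux f).IsMultiplicative := by
  refine ⟨Faux_one f hf, @fun m n hco => ?_⟩
  rcases eq_or_ne m 0 with rfl | hm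
  · simp [Faux, ArithmeticFunction.coe_mk]
  rcases eq_or_ne n 0 with rfl | hn
  · simp [Faux, ArithmeticFunction.coe_mk]
  rw [Faux_apply f (mul_ne_zero hm hn), Faux_apply f hm, Faux_apply f hn,
    hf.2 m n (Nat.pos_of_ne_zero hm) (Nat.pos_of_ne_zero hn) hco, xi_mul hco]
  push_cast
  field_simp

lemma Gaux_mult : (Gaux f).IsMultiplicative := by
  refine ⟨Gaux_one f, @fun m n hco => ?_⟩
  rcases eq_or_ne m 0 with rfl | hm
  · simp [Gaux, ArithmeticFunction.coe_mk]
  rcases eq_or_ne n 0 with rfl | hn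
  · simp [Gaux, ArithmeticFunction.coe_mk]
  rw [Gaux_apply f (mul_ne_zero hm hn), Gaux_apply f hm, Gaux_apply f hn,
    prod_fact_mul_coprime _ hco]
  have hΩ : bigOmega (m * n) = bigOmega m + bigOmega n := by
    rw [bigOmega_eq, bigOmega_eq, bigOmega_eq, Nat.factorization_mul_of_coprime hco,
      Finsupp.sum_add_index (by simp) (by simp)]
  rw [hΩ, pow_add]
  ring

lemma Gaux_prime_pow {p : ℕ} (hp : p.Prime) (k : ℕ) :
    Gaux f (p ^ k) = (-1 : ℂ) ^ k * f p ^ k := by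
  rw [Gaux_apply f (pow_ne_zero _ hp.ne_zero), bigOmega_prime_pow hp,
    hp.factorization_pow, Finsupp.prod_single_index (by simp)]

end

lemma FG_eq_one (f : ℕ → ℂ) (hf : IsMult f)
    (hvan : ∀ p a : ℕ, p.Prime → 2 ≤ a → f (p ^ a) = 0) :
    Faux f * Gaux f = 1 := by
  rw [ArithmeticFunction.IsMultiplicative.eq_iff_eq_on_prime_powers _
    ((Faux_mult f hf).mul (Gaux_mult f)) _ ArithmeticFunction.isMultiplicative_one]
  intro p i hp
  rcases Nat.eq_zero_or_pos i with rfl | hi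
  · simp [((Faux_mult f hf).mul (Gaux_mult f)).1]
  have hne : p ^ i ≠ 1 := by
    simpa using (Nat.one_lt_pow hi.ne' hp.one_lt).ne'
  rw [ArithmeticFunction.one_apply, if_neg hne, ArithmeticFunction.mul_apply,
    Nat.sum_divisorsAntidiagonal (fun a b => Faux f a * Gaux f b),
    Nat.sum_divisors_prime_pow hp]
  have hsub : Finset.range 2 ⊆ Finset.range (i + 1) := by
    apply Finset.range_subset_range.2; omega
  rw [← Finset.sum_subset hsub ?_]
  · rw [Finset.sum_range_succ, Finset.sum_range_one, pow_zero, pow_one,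
      Faux_one f hf, one_mul]
    have h1 : p ^ i / 1 = p ^ i := Nat.div_one _
    have h2 : p ^ i / p = p ^ (i - 1) := by
      simpa using Nat.pow_div hi hp.pos
    rw [h1, h2, Gaux_prime_pow f hp, Gaux_prime_pow f hp,
      Faux_apply f hp.ne_zero]
    have hxp : xi p = 1 := by
      have := xi_prime_pow hp 1; simpa using this
    rw [hxp]
    obtain ⟨j, rfl⟩ : ∃ j, i = j + 1 := ⟨i - 1, by omega⟩
    simp only [Nat.add_sub_cancel, Nat.cast_one, div_one, pow_succ]
    ring
  · intro j hj hj2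
    have hj2' : 2 ≤ j := by simp at hj2; omega
    rw [Faux_apply f (pow_ne_zero _ hp.ne_zero), hvan p j hp hj2']
    simp

lemma xi_factor {n d : ℕ} (hn : n ≠ 0) (hd : d ∣ n) :
    xi n = binomCoeff n d * (xi d * xi (n / d)) := by
  have hd0 : d ≠ 0 := fun h => hn (by simpa [h] using hd)
  have hnd0 : n / d ≠ 0 :=
    (Nat.div_pos (Nat.le_of_dvd (Nat.pos_of_ne_zero hn) hd) (Nat.pos_of_ne_zero hd0)).ne'
  have hsubd : d.primeFactors ⊆ n.primeFactors := Nat.primeFactors_mono hd hn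
  have hsubnd : (n / d).primeFactors ⊆ n.primeFactors :=
    Nat.primeFactors_mono (Nat.div_dvd_of_dvd hd) hn
  have hzero : ∀ (m p : ℕ), p ∉ m.primeFactors → m.factorization p = 0 := fun m p hp =>
    Finsupp.notMem_support_iff.mp (by rwa [Nat.support_factorization])
  have hxd : xi d = ∏ p ∈ n.primeFactors, Nat.factorial (d.factorization p) := by
    refine Finset.prod_subset hsubd fun p _ hp => ?_
    rw [hzero d p hp]; rfl
  have hxnd : xi (n / d) = ∏ p ∈ n.primeFactors, Nat.factorial ((n / d).factorization p) := by
    refine Finset.prod_subset hsubnd fun p _ hp => ?_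
    rw [hzero _ p hp]; rfl
  rw [hxd, hxnd, binomCoeff, xi, ← Finset.prod_mul_distrib, ← Finset.prod_mul_distrib]
  refine Finset.prod_congr rfl fun p _ => ?_
  have hle : d.factorization p ≤ n.factorization p :=
    (Nat.factorization_le_iff_dvd hd0 hn).2 hd p
  rw [Nat.factorization_div hd]
  simp only [Finsupp.tsub_apply]
  rw [← mul_assoc]
  exact (Nat.choose_mul_factorial_mul_factorial hle).symm

/-- If `f` is multiplicative with `f(p^a) = 0` for all primes `p` and all `a ≥ 2`, then
`g(n) = (-1)^{Ω(n)}·ξ(n)·∏_p f(p)^{ν_p(n)}` is the binomial inverse of `f`. -/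
theorem binomial_inverse_of_vanishing_on_higher_prime_powers
    (f : ℕ → ℂ) (hf : IsMult f)
    (hvan : ∀ p a : ℕ, p.Prime → 2 ≤ a → f (p ^ a) = 0) :
    ∀ n : ℕ, 0 < n →
      bconv f
        (fun m => (-1 : ℂ) ^ bigOmega m * (xi m : ℂ) *
          ∏ p ∈ m.primeFactors, f p ^ m.factorization p) n = delta n := by
  intro n hn
  have key : bconv f
      (fun m => (-1 : ℂ) ^ bigOmega m * (xi m : ℂ) *
        ∏ p ∈ m.primeFactors, f p ^ m.factorization p) n
      = (xi n : ℂ) * (Faux f * Gaux f) n := by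
    rw [ArithmeticFunction.mul_apply,
      Nat.sum_divisorsAntidiagonal (fun a b => Faux f a * Gaux f b), bconv,
      Finset.mul_sum]
    refine Finset.sum_congr rfl fun d hd => ?_
    obtain ⟨hdvd, hn0⟩ := Nat.mem_divisors.1 hd
    have hd0 : d ≠ 0 := fun h => hn0 (by simpa [h] using hdvd)
    have hnd0 : n / d ≠ 0 :=
      (Nat.div_pos (Nat.le_of_dvd (Nat.pos_of_ne_zero hn0) hdvd) (Nat.pos_of_ne_zero hd0)).ne'
    rw [Faux_apply f hd0, Gaux_apply f hnd0]
    have hxi : (xi n : ℂ) = (binomCoeff n d : ℂ) * ((xi d : ℂ) * (xi (n / d) : ℂ)) := by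
      rw [← Nat.cast_mul, ← Nat.cast_mul, ← xi_factor hn0 hdvd]
    rw [hxi]
    have : ((n / d).factorization.prod fun p k => f p ^ k)
        = ∏ p ∈ (n / d).primeFactors, f p ^ (n / d).factorization p := rfl
    rw [this]
    field_simp [xi_ne_zero]
    have := xi_ne_zero d
    field_simp
  rw [key, FG_eq_one f hf hvan, ArithmeticFunction.one_apply, delta]
  by_cases h1 : n = 1 <;> simp [h1, xi_one]
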